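/- Define u* ∈ ℝ^m coordinatewise by: u*_q = 1 if l_q < λ − 2μ(q/m − P); u*_q = 0 if l_q > λ − 2μ((q−1)/m − P); and u*_q = m(P − (l_q − λ)/(2μ) − (q−1)/m) if λ − 2μ(q/m − P) ≤ l_q ≤ λ − 2μ((q−1)/m − P). Then u* ∈ [0,1]^m and u* is a global minimizer of H over [0,1]^m. -/

import Mathlib

open Finset

noncomputable def clamp01 (x : ℝ) : ℝ := min 1 (max 0 x)

lemma clamp01_nonneg (x : ℝ) : 0 ≤ clamp01 x := le_min one_pos.le (le_max_left 0 x)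

lemma clamp01_le_one (x : ℝ) : clamp01 x ≤ 1 := min_le_left _ _

lemma clamp01_mono {x y : ℝ} (h : x ≤ y) : clamp01 x ≤ clamp01 y :=
  min_le_min le_rfl (max_le_max le_rfl h)

lemma clamp01_eq_one {x : ℝ} (h : 1 ≤ x) : clamp01 x = 1 :=
  min_eq_left (le_max_of_le_right h) |>.symm ▸ rfl

lemma clamp01_eq_zero {x : ℝ} (h : x ≤ 0) : clamp01 x = 0 := by
  unfold clamp01
  rw [max_eq_left h, min_eq_right zero_le_one]

lemma clamp01_eq_self {x : ℝ} (h0 : 0 ≤ x) (h1 : x ≤ 1) : clamp01 x = x := by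
  unfold clamp01
  rw [max_eq_right h0, min_eq_right h1]

lemma clamp01_pos {x : ℝ} (h : 0 < clamp01 x) : 0 < x := by
  by_contra hx
  rw [clamp01_eq_zero (not_lt.mp hx)] at h
  exact lt_irrefl 0 h

lemma clamp01_lt_one {x : ℝ} (h : clamp01 x < 1) : x < 1 := by
  by_contra hx
  rw [clamp01_eq_one (not_lt.mp hx)] at h
  exact lt_irrefl 1 h

lemma sum_clamp_Ico_le (x : ℝ) (q : ℕ) : ∀ k : ℕ,
    ∑ j ∈ Finset.Ico q k, clamp01 (x - j) ≤ max 0 (x - q) := by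
  intro k
  induction k with
  | zero => simp [le_max_left]
  | succ k ih =>
    rcases le_or_gt q k with h | h
    · rw [Finset.sum_Ico_succ_top h]
      rcases le_or_gt x k with hx | hx
      · have : clamp01 (x - k) = 0 := clamp01_eq_zero (by linarith)
        rw [this, add_zero]; exact ih
      · have h1 : ∑ j ∈ Finset.Ico q k, clamp01 (x - j) ≤ (k : ℝ) - q := by
          calc ∑ j ∈ Finset.Ico q k, clamp01 (x - j) ≤ ∑ _j ∈ Finset.Ico q k, (1:ℝ) :=
                Finset.sum_le_sum fun j _ => clamp01_le_one _
            _ = (k : ℝ) - q := by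
                rw [Finset.sum_const, Nat.card_Ico, nsmul_eq_mul, mul_one]
                exact Nat.cast_sub h
        have h2 : clamp01 (x - k) ≤ x - k := by
          have : (0:ℝ) ≤ x - k := by linarith
          calc clamp01 (x - k) ≤ max 0 (x - k) := min_le_right _ _
            _ = x - k := max_eq_right this
        have hq : (q:ℝ) ≤ k := by exact_mod_cast h
        have : x - (q:ℝ) ≤ max 0 (x - q) := le_max_right _ _
        linarith
    · rw [Finset.Ico_eq_empty (by omega)]
      simp [le_max_left]

lemma sum_clamp_range_ge (x : ℝ) : ∀ k : ℕ, x ≤ k →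
    x ≤ ∑ j ∈ Finset.range k, clamp01 (x - j) := by
  intro k
  induction k with
  | zero => intro h; simpa using h
  | succ k ih =>
    intro h
    rw [Finset.sum_range_succ]
    rcases le_or_gt x k with hx | hx
    · have := ih hx
      have h0 := clamp01_nonneg (x - k)
      linarith
    · have h1 : ∑ j ∈ Finset.range k, clamp01 (x - j) = k := by
        rw [Finset.sum_congr rfl (fun j hj => ?_), Finset.sum_const, Finset.card_range,
          nsmul_eq_mul, mul_one]
        have hj' : (j:ℝ) ≤ (k:ℝ) - 1 := by
          have := Finset.mem_range.mp hj
          have : (j:ℝ) + 1 ≤ (k:ℝ) := by exact_mod_cast this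
          linarith
        exact clamp01_eq_one (by linarith)
      have hk1 : x ≤ (k:ℝ) + 1 := by
        push_cast at h ⊢; linarith
      have h2 : clamp01 (x - k) = x - k := clamp01_eq_self (by linarith) (by linarith)
      rw [h1, h2]; linarith


set_option maxHeartbeats 1000000 in
theorem stmt7
    (n m : ℕ) (hn : 1 ≤ n) (hm : 1 ≤ m)
    (ξ : Fin n → Fin m → ℝ) (hξ : ∀ i j, 0 ≤ ξ i j)
    (lam μ : ℝ) (hlam : 0 < lam) (hμ : 0 < μ)
    (v : Fin n → ℝ) (hv : v ∈ Set.Icc (0 : Fin n → ℝ) 1)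
    (P : ℝ) (hP : P = (1 / (n : ℝ)) * ∑ i : Fin n, v i)
    (l : Fin m → ℝ) (hl : ∀ q, l q = (1 / (n : ℝ)) * ∑ i : Fin n, v i * ξ i q)
    (hsorted : Monotone l)
    (H : (Fin m → ℝ) → ℝ)
    (hH : ∀ u, H u = (1 / (m : ℝ)) * ∑ j : Fin m, u j * l j
      - (lam / (m : ℝ)) * ∑ j : Fin m, u j
      + μ * ((1 / (m : ℝ)) * ∑ j : Fin m, u j - P) ^ 2)
    (ustar : Fin m → ℝ)
    (hustar : ∀ q : Fin m, ustar q =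
      if l q < lam - 2 * μ * ((((q : ℕ) : ℝ) + 1) / (m : ℝ) - P) then 1
      else if lam - 2 * μ * (((q : ℕ) : ℝ) / (m : ℝ) - P) < l q then 0
      else (m : ℝ) * (P - (l q - lam) / (2 * μ) - ((q : ℕ) : ℝ) / (m : ℝ))) :
    ustar ∈ Set.Icc (0 : Fin m → ℝ) 1 ∧
      ∀ u ∈ Set.Icc (0 : Fin m → ℝ) 1, H ustar ≤ H u := by
  have hm0 : (0:ℝ) < m := by exact_mod_cast hm
  have h2μ : (0:ℝ) < 2 * μ := by linarith
  set θ : Fin m → ℝ := fun q => P + (lam - l q) / (2 * μ) with hθ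
  -- the key difference identity
  have hkey : ∀ (q : Fin m) (r : ℝ),
      lam - 2 * μ * (r / m - P) - l q = (2 * μ / m) * ((m:ℝ) * θ q - r) := by
    intro q r
    simp only [hθ]
    field_simp
    ring
  have hc : (0:ℝ) < 2 * μ / m := by positivity
  have hlt : ∀ (q : Fin m) (r : ℝ),
      (l q < lam - 2 * μ * (r / m - P)) ↔ r < (m:ℝ) * θ q := by
    intro q r
    rw [← sub_pos, hkey q r, ← sub_pos (b := r)]
    exact mul_pos_iff_of_pos_left hc
  have hgt : ∀ (q : Fin m) (r : ℝ),
      (lam - 2 * μ * (r / m - P) < l q) ↔ (m:ℝ) * θ q < r := by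
    intro q r
    have hkey' : l q - (lam - 2 * μ * (r / m - P)) = (2 * μ / m) * (r - (m:ℝ) * θ q) := by
      linear_combination (-1 : ℝ) * hkey q r
    rw [← sub_pos, hkey', ← sub_pos (b := (m:ℝ) * θ q)]
    exact mul_pos_iff_of_pos_left hc
  -- closed form via clamp01
  have hust : ∀ q : Fin m, ustar q = clamp01 ((m:ℝ) * θ q - q) := by
    intro q
    rw [hustar q]
    split_ifs with h1 h2
    · have := (hlt q (((q:ℕ):ℝ) + 1)).mp h1
      exact (clamp01_eq_one (by linarith)).symm
    · have := (hgt q ((q:ℕ):ℝ)).mp h2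
      exact (clamp01_eq_zero (by linarith)).symm
    · have hb1 : ¬ ((((q:ℕ):ℝ) + 1) < (m:ℝ) * θ q) := fun h => h1 ((hlt q _).mpr h)
      have hb2 : ¬ ((m:ℝ) * θ q < ((q:ℕ):ℝ)) := fun h => h2 ((hgt q _).mpr h)
      push_neg at hb1 hb2
      rw [clamp01_eq_self (by linarith) (by linarith)]
      simp only [hθ]
      field_simp
      ring
  have hust0 : ∀ q, 0 ≤ ustar q := fun q => (hust q) ▸ clamp01_nonneg _
  have hust1 : ∀ q, ustar q ≤ 1 := fun q => (hust q) ▸ clamp01_le_one _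
  have hmem : ustar ∈ Set.Icc (0 : Fin m → ℝ) 1 := by
    constructor <;> intro q
    · exact hust0 q
    · exact hust1 q
  refine ⟨hmem, ?_⟩
  -- θ is antitone
  have hθm : ∀ (j k : Fin m), j ≤ k → θ k ≤ θ j := by
    intro j k hjk
    have := hsorted hjk
    have : (lam - l k) / (2*μ) ≤ (lam - l j) / (2*μ) := by gcongr <;> linarith
    simp only [hθ]
    linarith
  -- natural-number indexed version of ustar
  set U : ℕ → ℝ := fun j => if h : j < m then ustar ⟨j, h⟩ else 0 with hU
  have hUS : ∑ j ∈ Finset.range m, U j = ∑ j : Fin m, ustar j := by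
    rw [← Fin.sum_univ_eq_sum_range]
    exact Finset.sum_congr rfl fun j _ => by simp [hU, j.isLt]
  have hU0 : ∀ j, 0 ≤ U j := by
    intro j; simp only [hU]; split
    · exact hust0 _
    · exact le_rfl
  have hU1 : ∀ j, U j ≤ 1 := by
    intro j; simp only [hU]; split
    · exact hust1 _
    · exact zero_le_one
  set Sstar : ℝ := ∑ j : Fin m, ustar j with hSstar
  -- L1 : if ustar q > 0 then Sstar ≤ m θ q
  have hL1 : ∀ q : Fin m, 0 < ustar q → Sstar ≤ (m:ℝ) * θ q := by
    intro q hq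
    have hx : (0:ℝ) < (m:ℝ) * θ q - q := clamp01_pos (by rw [← hust q]; exact hq)
    have hsplit : ∑ j ∈ Finset.range (q:ℕ), U j + ∑ j ∈ Finset.Ico (q:ℕ) m, U j
        = ∑ j ∈ Finset.range m, U j := Finset.sum_range_add_sum_Ico U (le_of_lt q.isLt)
    have hb1 : ∑ j ∈ Finset.range (q:ℕ), U j ≤ (q:ℕ) := by
      calc ∑ j ∈ Finset.range (q:ℕ), U j ≤ ∑ _j ∈ Finset.range (q:ℕ), (1:ℝ) :=
            Finset.sum_le_sum fun j _ => hU1 j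
        _ = (q:ℕ) := by simp
    have hb2 : ∑ j ∈ Finset.Ico (q:ℕ) m, U j
        ≤ ∑ j ∈ Finset.Ico (q:ℕ) m, clamp01 ((m:ℝ) * θ q - j) := by
      apply Finset.sum_le_sum
      intro j hj
      obtain ⟨hj1, hj2⟩ := Finset.mem_Ico.mp hj
      have : U j = clamp01 ((m:ℝ) * θ ⟨j, hj2⟩ - j) := by
        simp only [hU, dif_pos hj2]; exact hust _
      rw [this]
      apply clamp01_mono
      have : θ ⟨j, hj2⟩ ≤ θ q := hθm q ⟨j, hj2⟩ (by exact hj1)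
      nlinarith
    have hb3 := sum_clamp_Ico_le ((m:ℝ) * θ q) (q:ℕ) m
    rw [max_eq_right (by linarith)] at hb3
    rw [← hUS]
    linarith [hsplit, hb1, hb2, hb3]
  -- L2 : if ustar q < 1 then m θ q ≤ Sstar
  have hL2 : ∀ q : Fin m, ustar q < 1 → (m:ℝ) * θ q ≤ Sstar := by
    intro q hq
    have hx : (m:ℝ) * θ q - q < 1 := clamp01_lt_one (by rw [← hust q]; exact hq)
    have hsub : ∑ j ∈ Finset.range ((q:ℕ)+1), U j ≤ ∑ j ∈ Finset.range m, U j := by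
      apply Finset.sum_le_sum_of_subset_of_nonneg
      · exact Finset.range_subset_range.mpr q.isLt
      · intro j _ _; exact hU0 j
    have hb2 : ∑ j ∈ Finset.range ((q:ℕ)+1), clamp01 ((m:ℝ) * θ q - j)
        ≤ ∑ j ∈ Finset.range ((q:ℕ)+1), U j := by
      apply Finset.sum_le_sum
      intro j hj
      have hj1 : j ≤ (q:ℕ) := Nat.lt_succ_iff.mp (Finset.mem_range.mp hj)
      have hj2 : j < m := lt_of_le_of_lt hj1 q.isLt
      have : U j = clamp01 ((m:ℝ) * θ ⟨j, hj2⟩ - j) := by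
        simp only [hU, dif_pos hj2]; exact hust _
      rw [this]
      apply clamp01_mono
      have : θ q ≤ θ ⟨j, hj2⟩ := hθm ⟨j, hj2⟩ q (by exact hj1)
      nlinarith
    have hb3 : (m:ℝ) * θ q ≤ ∑ j ∈ Finset.range ((q:ℕ)+1), clamp01 ((m:ℝ) * θ q - j) := by
      apply sum_clamp_range_ge
      push_cast
      linarith
    rw [← hUS]
    linarith [hsub, hb2, hb3]
  -- now the main minimization
  intro u hu
  obtain ⟨hu0, hu1⟩ := hu
  have hu0' : ∀ j, 0 ≤ u j := fun j => by simpa using hu0 j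
  have hu1' : ∀ j, u j ≤ 1 := fun j => by simpa using hu1 j
  have hterm : ∀ j : Fin m, 0 ≤ (u j - ustar j) * (Sstar / m - θ j) := by
    intro j
    rcases lt_trichotomy Sstar ((m:ℝ) * θ j) with h | h | h
    · have h1 : ustar j = 1 := by
        by_contra hne
        have : ustar j < 1 := lt_of_le_of_ne (hust1 j) hne
        linarith [hL2 j this]
      have hf : Sstar / m - θ j < 0 := by
        have : Sstar / m < θ j := by rw [div_lt_iff₀ hm0]; linarith
        linarith
      have hg : u j - ustar j ≤ 0 := by rw [h1]; linarith [hu1' j]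
      nlinarith [mul_nonneg (neg_nonneg.mpr hg) (neg_nonneg.mpr hf.le)]
    · have : Sstar / m - θ j = 0 := by
        rw [h]; field_simp; ring
      rw [this, mul_zero]
    · have h1 : ustar j = 0 := by
        by_contra hne
        have : 0 < ustar j := lt_of_le_of_ne (hust0 j) (Ne.symm hne)
        linarith [hL1 j this]
      have hf : 0 < Sstar / m - θ j := by
        have : θ j < Sstar / m := by rw [lt_div_iff₀ hm0]; linarith
        linarith
      have hg : 0 ≤ u j - ustar j := by rw [h1]; linarith [hu0' j]
      exact mul_nonneg hg (le_of_lt hf)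
  set S : ℝ := ∑ j : Fin m, u j with hS
  set A : ℝ := ∑ j : Fin m, u j * l j with hA
  set B : ℝ := ∑ j : Fin m, ustar j * l j with hB
  have hident : H u - H ustar
      = (2 * μ / m) * (∑ j : Fin m, (u j - ustar j) * (Sstar / m - θ j))
        + μ * (S / m - Sstar / m) ^ 2 := by
    have hsum : ∑ j : Fin m, (u j - ustar j) * (Sstar / m - θ j)
        = (Sstar / m - P) * S - (Sstar / m - P) * Sstar
          - (lam * S - A) / (2*μ) + (lam * Sstar - B) / (2*μ) := by
      have e1 : ∀ j : Fin m, (u j - ustar j) * (Sstar / m - θ j)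
          = (Sstar / m - P) * u j - (Sstar / m - P) * ustar j
            - (lam * u j - u j * l j) / (2*μ) + (lam * ustar j - ustar j * l j) / (2*μ) := by
        intro j
        simp only [hθ]
        field_simp
        ring
      rw [Finset.sum_congr rfl fun j _ => e1 j]
      rw [Finset.sum_add_distrib, Finset.sum_sub_distrib, Finset.sum_sub_distrib,
        ← Finset.mul_sum, ← Finset.mul_sum, ← Finset.sum_div, ← Finset.sum_div,
        Finset.sum_sub_distrib, Finset.sum_sub_distrib, ← Finset.mul_sum, ← Finset.mul_sum,
        ← hS, ← hA, ← hSstar, ← hB]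
    have hscalar : ∀ (S' Ss' A' B' : ℝ),
        (1/(m:ℝ)*A' - lam/m*S' + μ*(1/(m:ℝ)*S' - P)^2)
          - (1/(m:ℝ)*B' - lam/m*Ss' + μ*(1/(m:ℝ)*Ss' - P)^2)
        = (2*μ/m) * ((Ss'/m - P)*S' - (Ss'/m - P)*Ss'
            - (lam*S' - A')/(2*μ) + (lam*Ss' - B')/(2*μ)) + μ*(S'/m - Ss'/m)^2 := by
      intro S' Ss' A' B'
      field_simp
      ring
    rw [hsum, hH u, hH ustar, ← hS, ← hA, ← hSstar, ← hB]
    exact hscalar S Sstar A B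
  have hT : 0 ≤ ∑ j : Fin m, (u j - ustar j) * (Sstar / m - θ j) :=
    Finset.sum_nonneg fun j _ => hterm j
  have h1 : 0 ≤ (2 * μ / m) * (∑ j : Fin m, (u j - ustar j) * (Sstar / m - θ j)) :=
    mul_nonneg (le_of_lt hc) hT
  have h2 : 0 ≤ μ * (S / m - Sstar / m) ^ 2 := by positivity
  linarith [hident]
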